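/- Let R be a commutative ℚ-algebra, A an associative unital R-algebra, C a maximal commutative R-subalgebra of A, and M an A-bimodule symmetric over R. Then the set Def M := {polynomials Σ_p m_p t^p ∈ M[t] | m_p ∈ F^C_p M for all p} is stable under left and right multiplication by elements of Def A := {Σ_p a_p t^p ∈ A[t] | a_p ∈ F^C_p A for all p}; i.e., Def M is a Def A-sub-bimodule of M[t]. -/

import Mathlib

/- STATEMENT 15: Over a commutative `ℚ`-algebra `R`, with `C` maximal commutative in `A`
and `M` an `A`-bimodule symmetric over `R`: `Def M = {Σ_p m_p t^p | m_p ∈ F^C_p M}` is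
stable under left and right multiplication by elements of
`Def A = {Σ_p a_p t^p | a_p ∈ F^C_p A}`.  Stated on coefficient sequences: if
`a_p ∈ F^C_p A` and `m_p ∈ F^C_p M` for all p, then every coefficient
`Σ_{i+j=p} a_i·m_j` (resp. `Σ_{i+j=p} m_j·a_i`) of the product lies in `F^C_p M`. -/

variable {R A M : Type*} [CommRing R] [Algebra ℚ R] [Ring A] [Algebra R A]
  [AddCommGroup M] [Module A M] [Module Aᵐᵒᵖ M] [SMulCommClass A Aᵐᵒᵖ M]
  [Module R M] [IsScalarTower R A M] [IsScalarTower R Aᵐᵒᵖ M]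

/-- `ad_a(m) = a·m − m·a` on the bimodule `M`. -/
def adM (a : A) (m : M) : M := a • m - MulOpposite.op a • m

/-- `ad_c(a) = ca − ac` on the algebra `A`. -/
def adA (c a : A) : A := c * a - a * c

lemma adM_add (c : A) (x y : M) : adM c (x + y) = adM c x + adM c y := by
  simp only [adM, smul_add]; abel

lemma adM_zero (c : A) : adM c (0 : M) = 0 := by simp [adM]

lemma adM_iter_add (c : A) (n : ℕ) (x y : M) :
    (adM c)^[n] (x + y) = (adM c)^[n] x + (adM c)^[n] y := by
  induction n generalizing x y with
  | zero => simp
  | succ n ih =>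
      rw [Function.iterate_succ_apply, Function.iterate_succ_apply,
        Function.iterate_succ_apply, adM_add, ih]

lemma adM_iter_zero (c : A) (n : ℕ) : (adM c)^[n] (0 : M) = 0 :=
  Function.iterate_fixed (adM_zero c) n

lemma adM_iter_sum (c : A) (n : ℕ) {ι : Type*} (s : Finset ι) (f : ι → M) :
    (adM c)^[n] (∑ i ∈ s, f i) = ∑ i ∈ s, (adM c)^[n] (f i) := by
  classical
  induction s using Finset.induction_on with
  | empty => simp [adM_iter_zero]
  | insert _ _ h ih => rw [Finset.sum_insert h, Finset.sum_insert h, adM_iter_add, ih]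

lemma adM_leibniz (c a : A) (x : M) :
    adM c (a • x) = adA c a • x + a • adM c x := by
  simp only [adM, adA, smul_sub, sub_smul, mul_smul]
  rw [smul_comm a (MulOpposite.op c) x]
  abel

lemma adM_leibniz_op (c a : A) (x : M) :
    adM c (MulOpposite.op a • x) =
      MulOpposite.op (adA c a) • x + MulOpposite.op a • adM c x := by
  simp only [adM, adA, smul_sub, MulOpposite.op_sub, sub_smul, MulOpposite.op_mul, mul_smul]
  rw [smul_comm c (MulOpposite.op a) x]
  abel

lemma adM_key (c : A) : ∀ n i j : ℕ, i + j = n → ∀ (a : A) (x : M),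
    (adA c)^[i + 1] a = 0 → (adM c)^[j + 1] x = 0 →
    (adM c)^[n + 1] (a • x) = 0 := by
  intro n
  induction n using Nat.strong_induction_on with
  | _ n ih =>
    intro i j hij a x hA hM
    rw [Function.iterate_succ_apply, adM_leibniz, adM_iter_add]
    have h1 : (adM c)^[n] (adA c a • x) = 0 := by
      cases i with
      | zero =>
          have : adA c a = 0 := by simpa using hA
          rw [this, zero_smul, adM_iter_zero]
      | succ i' =>
          have hn : n = (i' + j) + 1 := by omega
          have hA' : (adA c)^[i' + 1] (adA c a) = 0 := by
            rw [← Function.iterate_succ_apply]; exact hA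
          have := ih (i' + j) (by omega) i' j rfl (adA c a) x hA' hM
          rw [hn]; exact this
    have h2 : (adM c)^[n] (a • adM c x) = 0 := by
      cases j with
      | zero =>
          have : adM c x = 0 := by simpa using hM
          rw [this, smul_zero, adM_iter_zero]
      | succ j' =>
          have hn : n = (i + j') + 1 := by omega
          have hM' : (adM c)^[j' + 1] (adM c x) = 0 := by
            rw [← Function.iterate_succ_apply]; exact hM
          have := ih (i + j') (by omega) i j' rfl a (adM c x) hA hM'
          rw [hn]; exact this
    rw [h1, h2, add_zero]

lemma adM_key_op (c : A) : ∀ n i j : ℕ, i + j = n → ∀ (a : A) (x : M),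
    (adA c)^[i + 1] a = 0 → (adM c)^[j + 1] x = 0 →
    (adM c)^[n + 1] (MulOpposite.op a • x) = 0 := by
  intro n
  induction n using Nat.strong_induction_on with
  | _ n ih =>
    intro i j hij a x hA hM
    rw [Function.iterate_succ_apply, adM_leibniz_op, adM_iter_add]
    have h1 : (adM c)^[n] (MulOpposite.op (adA c a) • x) = 0 := by
      cases i with
      | zero =>
          have : adA c a = 0 := by simpa using hA
          rw [this, MulOpposite.op_zero, zero_smul, adM_iter_zero]
      | succ i' =>
          have hn : n = (i' + j) + 1 := by omega
          have hA' : (adA c)^[i' + 1] (adA c a) = 0 := by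
            rw [← Function.iterate_succ_apply]; exact hA
          have := ih (i' + j) (by omega) i' j rfl (adA c a) x hA' hM
          rw [hn]; exact this
    have h2 : (adM c)^[n] (MulOpposite.op a • adM c x) = 0 := by
      cases j with
      | zero =>
          have : adM c x = 0 := by simpa using hM
          rw [this, smul_zero, adM_iter_zero]
      | succ j' =>
          have hn : n = (i + j') + 1 := by omega
          have hM' : (adM c)^[j' + 1] (adM c x) = 0 := by
            rw [← Function.iterate_succ_apply]; exact hM
          have := ih (i + j') (by omega) i j' rfl a (adM c x) hA hM'
          rw [hn]; exact this
    rw [h1, h2, add_zero]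

theorem rees_deformation_sub_bimodule (C : Subalgebra R A)
    (hC : ∀ x ∈ C, ∀ y ∈ C, x * y = y * x)
    (hmax : ∀ a : A, (∀ c ∈ C, c * a = a * c) → a ∈ C)
    (a : ℕ → A) (ha : ∀ p : ℕ, ∀ c ∈ C, (adA c)^[p + 1] (a p) = 0)
    (m : ℕ → M) (hm : ∀ p : ℕ, ∀ c ∈ C, (adM c)^[p + 1] (m p) = 0)
    (p : ℕ) :
    (∀ c ∈ C,
        (adM c)^[p + 1] (∑ i ∈ Finset.range (p + 1), a i • m (p - i)) = 0) ∧
    (∀ c ∈ C,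
        (adM c)^[p + 1]
          (∑ i ∈ Finset.range (p + 1), MulOpposite.op (a i) • m (p - i)) = 0) := by
  constructor
  · intro c hc
    rw [adM_iter_sum]
    refine Finset.sum_eq_zero fun i hi => ?_
    have hip : i ≤ p := Nat.lt_succ_iff.mp (Finset.mem_range.mp hi)
    exact adM_key c p i (p - i) (by omega) (a i) (m (p - i)) (ha i c hc) (hm (p - i) c hc)
  · intro c hc
    rw [adM_iter_sum]
    refine Finset.sum_eq_zero fun i hi => ?_
    have hip : i ≤ p := Nat.lt_succ_iff.mp (Finset.mem_range.mp hi)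
    exact adM_key_op c p i (p - i) (by omega) (a i) (m (p - i)) (ha i c hc) (hm (p - i) c hc)
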